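/- If η : [0,b_η] → 𝓜 is a 1-Lipschitz curve with respect to d_𝓜, and s,t ∈ [0,b_η] with |s−t| < ε, then supp(η(t)) ⊆ (supp(η(s)))_ε. Consequently ⋃_{s ∈ [0,b_η]} supp(η(s)) is compact. -/

import Mathlib

open MeasureTheory Set Filter
open scoped ENNReal Classical

variable {X : Type*} [MetricSpace X] [MeasurableSpace X]

/-- Total mass of a measure, as a real number. -/
noncomputable def mass (ν : Measure X) : ℝ := (ν Set.univ).toReal

/-- The support of a measure. -/
def msupp (ν : Measure X) : Set X := {x : X | ∀ ε : ℝ, 0 < ε → 0 < ν (Metric.ball x ε)}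

/-- The set `𝓜` of measures dominated by `μ` with compact support. -/
def MM (μ : Measure X) : Set (Measure X) := {ν | ν ≤ μ ∧ IsCompact (msupp ν)}

/-- Gauge function `h` used in the definition of the mass transport metric. -/
def IsGauge (h : ℝ → ℝ) : Prop :=
  StrictMonoOn h (Set.Ici 0) ∧ ContinuousOn h (Set.Ici 0) ∧ h 0 = 0 ∧
  Tendsto (fun ε => h ε / ε) (nhdsWithin 0 (Set.Ioi 0)) (nhds 0) ∧
  (∀ a b : ℝ, 0 ≤ a → 0 ≤ b → h a + h b ≤ h (a + b)) ∧
  Tendsto h atTop atTop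

/-- `Γ_{ε,δ}(ν,η) ≠ ∅`: existence of a countable mass-transport decomposition. -/
def GammaDecomp (μ : Measure X) (ε δ : ℝ) (ν η : Measure X) : Prop :=
  ∃ νi ηi : ℕ → Measure X,
    (∀ i, νi i ∈ MM μ) ∧ (∀ i, ηi i ∈ MM μ) ∧
    ν = Measure.sum νi ∧ η = Measure.sum ηi ∧
    (∃ S : ℝ, HasSum (fun i => |mass (νi i) - mass (ηi i)|) S ∧ S ≤ δ) ∧
    (∀ i, Metric.diam (msupp (νi i) ∪ msupp (ηi i)) ≤ ε)

/-- The mass transport metric `d_𝓜`. -/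
noncomputable def dM (h : ℝ → ℝ) (μ : Measure X) (ν η : Measure X) : ℝ :=
  sInf {ε : ℝ | 0 < ε ∧ GammaDecomp μ ε (h ε) ν η}

/-- A rectifiable curve in `𝓜` subparametrized by arc-length: a `1`-Lipschitz map
`[0,b] → (𝓜, d_𝓜)`. -/
def IsCurveM (h : ℝ → ℝ) (μ : Measure X) (b : ℝ) (γ : ℝ → Measure X) : Prop :=
  0 ≤ b ∧ (∀ t ∈ Icc (0:ℝ) b, γ t ∈ MM μ) ∧
  ∀ s ∈ Icc (0:ℝ) b, ∀ t ∈ Icc (0:ℝ) b, dM h μ (γ s) (γ t) ≤ |s - t|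

/-- A rectifiable curve in `𝓧 = 𝓜 \ {0}` subparametrized by arc-length. -/
def IsCurveX (h : ℝ → ℝ) (μ : Measure X) (b : ℝ) (γ : ℝ → Measure X) : Prop :=
  IsCurveM h μ b γ ∧ ∀ t ∈ Icc (0:ℝ) b, γ t ≠ 0

/-- The mean value functional `F_f(η) = (1/‖η‖) ∫ f dη`. -/
noncomputable def FfM (f : X → ℝ) (η : Measure X) : ℝ := (∫ x, f x ∂η) / mass η

/-- `r_F^ε(η)`. -/
noncomputable def rGradE (h : ℝ → ℝ) (μ : Measure X) (F : Measure X → ℝ) (ε : ℝ)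
    (η : Measure X) : ℝ≥0∞ :=
  sSup {r : ℝ≥0∞ | ∃ (b : ℝ) (γ : ℝ → Measure X) (s : ℝ),
    IsCurveX h μ b γ ∧ γ 0 = η ∧ 0 < s ∧ s < ε ∧ s < b ∧
    r = ENNReal.ofReal (|F (γ s) - F η| / s)}

/-- The upper gradient `r_F(η) = lim_{ε→0} r_F^ε(η)`. -/
noncomputable def rGrad (h : ℝ → ℝ) (μ : Measure X) (F : Measure X → ℝ)
    (η : Measure X) : ℝ≥0∞ :=
  ⨅ (ε : ℝ) (_ : 0 < ε), rGradE h μ F ε η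

/-- Upper semicontinuous regularization along curves of `g : 𝓧 → [0,∞]`. -/
noncomputable def breveG (h : ℝ → ℝ) (μ : Measure X) (g : Measure X → ℝ≥0∞)
    (η : Measure X) : ℝ≥0∞ :=
  ⨅ (s : ℝ) (_ : 0 < s), sSup {r : ℝ≥0∞ | ∃ (b : ℝ) (γ : ℝ → Measure X) (t : ℝ),
    IsCurveX h μ b γ ∧ γ 0 = η ∧ 0 ≤ t ∧ t < s ∧ t ≤ b ∧ r = g (γ t)}

/-- `sup { Σᵢ G(ηᵢ)^p ‖ηᵢ‖ }` over finite disjointly supported families in `𝓧`. -/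
noncomputable def LpPow (μ : Measure X) (p : ℝ) (G : Measure X → ℝ≥0∞) : ℝ≥0∞ :=
  sSup {r : ℝ≥0∞ | ∃ (k : ℕ) (η : Fin k → Measure X),
    (∀ i, η i ∈ MM μ ∧ η i ≠ 0) ∧
    (∀ i j, i ≠ j → Disjoint (msupp (η i)) (msupp (η j))) ∧
    r = ∑ i, (G (η i)) ^ p * (η i) Set.univ}

/-- The `𝓛^p(𝓧)` norm of `F : 𝓧 → ℝ`. -/
noncomputable def LpNorm (μ : Measure X) (p : ℝ) (F : Measure X → ℝ) : ℝ≥0∞ :=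
  (LpPow μ p (fun η => ENNReal.ofReal |F η|)) ^ (1 / p)

/-- The `𝓛^p(𝓧)` norm for an extended exponent `p ∈ [1,∞]`. -/
noncomputable def LpNormE (μ : Measure X) (p : ℝ≥0∞) (F : Measure X → ℝ) : ℝ≥0∞ :=
  if p = ∞ then ⨆ (η : Measure X) (_ : η ∈ MM μ ∧ η ≠ 0), ENNReal.ofReal |F η|
  else LpNorm μ p.toReal F




open scoped Topology

set_option linter.unusedSectionVars false
set_option linter.unusedVariables false

lemma msupp_isClosed (ν : Measure X) : IsClosed (msupp ν) := by
  rw [← isOpen_compl_iff, Metric.isOpen_iff]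
  intro x hx
  simp only [mem_compl_iff, msupp, mem_setOf_eq] at hx
  push_neg at hx
  obtain ⟨ε, hε, hball⟩ := hx
  refine ⟨ε / 2, by positivity, fun y hy => ?_⟩
  simp only [mem_compl_iff, msupp, mem_setOf_eq]
  push_neg
  refine ⟨ε / 2, by positivity, ?_⟩
  refine le_trans (measure_mono fun z hz => ?_) hball
  simp only [Metric.mem_ball] at *
  calc dist z x ≤ dist z y + dist y x := dist_triangle _ _ _
    _ < ε / 2 + ε / 2 := add_lt_add hz hy
    _ = ε := by ring

lemma measure_compl_msupp [TopologicalSpace.SeparableSpace X] (ν : Measure X) :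
    ν (msupp ν)ᶜ = 0 := by
  haveI : SecondCountableTopology X := UniformSpace.secondCountable_of_separable X
  apply measure_null_of_locally_null
  intro x hx
  simp only [mem_compl_iff, msupp, mem_setOf_eq] at hx
  push_neg at hx
  obtain ⟨ε, hε, hball⟩ := hx
  exact ⟨Metric.ball x ε, mem_nhdsWithin_of_mem_nhds (Metric.ball_mem_nhds x hε),
    le_antisymm hball zero_le⟩

lemma msupp_zero : msupp (0 : Measure X) = ∅ := by
  ext x; simp only [msupp, mem_setOf_eq, mem_empty_iff_false, iff_false, not_forall]
  exact ⟨1, one_pos, by simp⟩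

lemma measure_univ_lt_top_of_MM [TopologicalSpace.SeparableSpace X]
    {μ ν : Measure X} [IsFiniteMeasureOnCompacts μ] (hν : ν ∈ MM μ) : ν Set.univ < ⊤ := by
  have h1 : ν Set.univ ≤ ν (msupp ν) + ν (msupp ν)ᶜ := by
    rw [← Set.union_compl_self (msupp ν)]; exact measure_union_le _ _
  rw [measure_compl_msupp, add_zero] at h1
  exact lt_of_le_of_lt (h1.trans (Measure.le_iff'.mp hν.1 _)) hν.2.measure_lt_top

lemma sum_single_eq {ν : Measure X} :
    Measure.sum (fun i : ℕ => if i = 0 then ν else 0) = ν := by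
  ext s hs
  rw [Measure.sum_apply _ hs]
  rw [tsum_eq_single 0 (by intro i hi; simp [hi])]
  simp

lemma exists_gamma {h : ℝ → ℝ} (hh : IsGauge h) {μ ν η : Measure X}
    (hν : ν ∈ MM μ) (hη : η ∈ MM μ) :
    ∃ ε : ℝ, 0 < ε ∧ GammaDecomp μ ε (h ε) ν η := by
  obtain ⟨ε, hε⟩ := (hh.2.2.2.2.2.eventually_ge_atTop (|mass ν - mass η|)).and
    (eventually_ge_atTop (max 1 (Metric.diam (msupp ν ∪ msupp η)))) |>.exists
  refine ⟨ε, lt_of_lt_of_le (lt_of_lt_of_le one_pos (le_max_left _ _)) hε.2, ?_⟩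
  refine ⟨fun i => if i = 0 then ν else 0, fun i => if i = 0 then η else 0, ?_, ?_,
    sum_single_eq.symm, sum_single_eq.symm, ⟨|mass ν - mass η|, ?_, hε.1⟩, ?_⟩
  · intro i; by_cases hi : i = 0
    · simpa [hi] using hν
    · simp only [hi, if_false]; exact ⟨Measure.zero_le μ, by rw [msupp_zero]; exact isCompact_empty⟩
  · intro i; by_cases hi : i = 0
    · simpa [hi] using hη
    · simp only [hi, if_false]; exact ⟨Measure.zero_le μ, by rw [msupp_zero]; exact isCompact_empty⟩
  · have : (fun i : ℕ => |mass (if i = 0 then ν else 0) - mass (if i = 0 then η else 0)|)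
        = fun i : ℕ => if i = 0 then |mass ν - mass η| else 0 := by
      funext i; by_cases hi : i = 0 <;> simp [hi, mass]
    rw [this]
    exact hasSum_ite_eq 0 _
  · intro i; by_cases hi : i = 0
    · simpa [hi] using le_trans (le_max_right _ _) hε.2
    · simp [hi, msupp_zero, Metric.diam_empty]
      exact le_trans (le_trans zero_le_one (le_max_left _ _)) hε.2

lemma exists_decomp_of_dM_lt {h : ℝ → ℝ} (hh : IsGauge h) {μ ν η : Measure X} {ρ : ℝ}
    (hν : ν ∈ MM μ) (hη : η ∈ MM μ) (hρ : dM h μ ν η < ρ) :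
    ∃ ρ' : ℝ, 0 < ρ' ∧ ρ' < ρ ∧ GammaDecomp μ ρ' (h ρ') ν η := by
  obtain ⟨ε0, hε0, hG0⟩ := exists_gamma hh hν hη
  obtain ⟨ρ', hρ'S, hρ'lt⟩ := exists_lt_of_csInf_lt (Set.nonempty_of_mem (show ε0 ∈ {ε : ℝ | 0 < ε ∧ GammaDecomp μ ε (h ε) ν η} from ⟨hε0, hG0⟩)) hρ
  exact ⟨ρ', hρ'S.1, hρ'lt, hρ'S.2⟩

lemma step_bound [BorelSpace X] [TopologicalSpace.SeparableSpace X]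
    {μ : Measure X} [IsFiniteMeasureOnCompacts μ] {ν η : Measure X} {ρ δ : ℝ}
    (hρ : 0 ≤ ρ) (hG : GammaDecomp μ ρ δ ν η) {A : Set X} (hA : MeasurableSet A) :
    η (Metric.cthickening ρ A)ᶜ ≤ ν Aᶜ + ENNReal.ofReal δ := by
  obtain ⟨νi, ηi, hνi, hηi, hsν, hsη, ⟨S, hS, hSδ⟩, hdiam⟩ := hG
  set T := Metric.cthickening ρ A with hT
  have hTm : MeasurableSet Tᶜ := (Metric.isClosed_cthickening.measurableSet).compl
  have key : ∀ i, ηi i Tᶜ ≤ νi i Aᶜ + ENNReal.ofReal (|mass (νi i) - mass (ηi i)|) := by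
    intro i
    by_cases hcase : (msupp (νi i) ∩ A).Nonempty
    · obtain ⟨z, hz1, hz2⟩ := hcase
      have hsub : msupp (ηi i) ⊆ T := by
        intro y hy
        refine Metric.mem_cthickening_of_dist_le y z ρ A hz2 ?_
        refine le_trans (Metric.dist_le_diam_of_mem ?_ (Or.inr hy) (Or.inl hz1)) (hdiam i)
        exact ((hνi i).2.union (hηi i).2).isBounded
      have : ηi i Tᶜ ≤ ηi i (msupp (ηi i))ᶜ :=
        measure_mono (compl_subset_compl.mpr hsub)
      rw [measure_compl_msupp] at this
      exact le_trans this zero_le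
    · rw [Set.not_nonempty_iff_eq_empty] at hcase
      have hA0 : νi i A = 0 := by
        refine measure_mono_null ?_ (measure_compl_msupp (νi i))
        rw [← Set.disjoint_iff_inter_eq_empty] at hcase
        exact fun x hx => (Set.disjoint_right.mp hcase hx)
      have hν_fin : νi i Set.univ ≠ ⊤ := (measure_univ_lt_top_of_MM (hνi i)).ne
      have hη_fin : ηi i Set.univ ≠ ⊤ := (measure_univ_lt_top_of_MM (hηi i)).ne
      have h1 : ηi i Tᶜ ≤ ηi i Set.univ := measure_mono (Set.subset_univ _)
      have h2 : ηi i Set.univ = ENNReal.ofReal (mass (ηi i)) := by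
        rw [mass, ENNReal.ofReal_toReal hη_fin]
      have h3 : mass (ηi i) ≤ mass (νi i) + |mass (νi i) - mass (ηi i)| := by
        have := abs_sub_abs_le_abs_sub (mass (ηi i)) (mass (νi i))
        have h4 : mass (ηi i) - mass (νi i) ≤ |mass (νi i) - mass (ηi i)| := by
          rw [abs_sub_comm]; exact le_abs_self _
        linarith
      have h5 : νi i Set.univ ≤ νi i Aᶜ := by
        have : νi i Set.univ ≤ νi i A + νi i Aᶜ := by
          rw [← Set.union_compl_self A]; exact measure_union_le _ _
        rwa [hA0, zero_add] at this
      calc ηi i Tᶜ ≤ ENNReal.ofReal (mass (ηi i)) := h2 ▸ h1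
        _ ≤ ENNReal.ofReal (mass (νi i) + |mass (νi i) - mass (ηi i)|) :=
          ENNReal.ofReal_le_ofReal h3
        _ = ENNReal.ofReal (mass (νi i)) + ENNReal.ofReal |mass (νi i) - mass (ηi i)| :=
          ENNReal.ofReal_add (ENNReal.toReal_nonneg) (abs_nonneg _)
        _ ≤ νi i Aᶜ + ENNReal.ofReal |mass (νi i) - mass (ηi i)| := by
          gcongr
          rw [mass, ENNReal.ofReal_toReal hν_fin]
          exact h5
  calc η Tᶜ = ∑' i, ηi i Tᶜ := by rw [hsη, Measure.sum_apply _ hTm]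
    _ ≤ ∑' i, (νi i Aᶜ + ENNReal.ofReal (|mass (νi i) - mass (ηi i)|)) :=
      ENNReal.tsum_le_tsum key
    _ = (∑' i, νi i Aᶜ) + ∑' i, ENNReal.ofReal (|mass (νi i) - mass (ηi i)|) :=
      ENNReal.tsum_add
    _ ≤ ν Aᶜ + ENNReal.ofReal δ := by
      gcongr
      · rw [hsν, Measure.sum_apply _ hA.compl]
      · rw [← ENNReal.ofReal_tsum_of_nonneg (fun i => abs_nonneg _) hS.summable, hS.tsum_eq]
        exact ENNReal.ofReal_le_ofReal hSδ

lemma chain_bound [BorelSpace X] [TopologicalSpace.SeparableSpace X]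
    {μ : Measure X} [IsFiniteMeasureOnCompacts μ] {h : ℝ → ℝ} {b : ℝ} {γ : ℝ → Measure X}
    (hh : IsGauge h) (hγ : IsCurveM h μ b γ)
    {s t : ℝ} (hs : s ∈ Icc (0:ℝ) b) (ht : t ∈ Icc (0:ℝ) b) {c : ℝ} (hc : |s - t| < c)
    {n : ℕ} (hn : 0 < n) :
    (γ t) (Metric.cthickening c (msupp (γ s)))ᶜ ≤ (n : ℝ≥0∞) * ENNReal.ofReal (h (c / n)) := by
  have hc0 : 0 < c := lt_of_le_of_lt (abs_nonneg _) hc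
  have hn0 : (0:ℝ) < n := Nat.cast_pos.mpr hn
  have hcn : 0 < c / n := div_pos hc0 hn0
  set u : ℕ → ℝ := fun k => s + k * ((t - s) / n) with hu_def
  have hu : ∀ k : ℕ, k ≤ n → u k ∈ Icc (0:ℝ) b := by
    intro k hk
    have hk1 : (k : ℝ) / n ≤ 1 := (div_le_one hn0).mpr (Nat.cast_le.mpr hk)
    have hk0 : (0:ℝ) ≤ (k : ℝ) / n := by positivity
    have hmem := (convex_Icc (0:ℝ) b) hs ht (sub_nonneg.mpr hk1) hk0 (by ring)
    have : u k = (1 - (k:ℝ)/n) • s + ((k:ℝ)/n) • t := by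
      simp only [smul_eq_mul, hu_def]
      field_simp
      ring
    rwa [this]
  set M := msupp (γ s) with hM
  have main : ∀ k : ℕ, k ≤ n →
      (γ (u k)) (Metric.cthickening ((k:ℝ) * (c / n)) M)ᶜ
        ≤ (k : ℝ≥0∞) * ENNReal.ofReal (h (c / n)) := by
    intro k
    induction k with
    | zero =>
      intro _
      have h1 : u 0 = s := by simp [hu_def]
      have h2 : ((0:ℕ):ℝ) * (c / n) = 0 := by simp
      rw [h1, h2, Metric.cthickening_zero, (msupp_isClosed (γ s)).closure_eq, ← hM,
        measure_compl_msupp]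
      simp
    | succ k ih =>
      intro hk1
      have hk : k ≤ n := le_of_lt (Nat.lt_of_succ_le hk1)
      have hd : dM h μ (γ (u k)) (γ (u (k+1))) < c / n := by
        refine lt_of_le_of_lt (hγ.2.2 _ (hu k hk) _ (hu (k+1) hk1)) ?_
        have : u k - u (k+1) = -((t - s) / n) := by simp [hu_def]; ring
        rw [this, abs_neg, abs_div, abs_of_pos hn0, abs_sub_comm]
        gcongr
      obtain ⟨ρ', hρ'0, hρ'lt, hG⟩ := exists_decomp_of_dM_lt hh (hγ.2.1 _ (hu k hk))
        (hγ.2.1 _ (hu (k+1) hk1)) hd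
      have hAm : MeasurableSet (Metric.cthickening ((k:ℝ) * (c / n)) M) :=
        Metric.isClosed_cthickening.measurableSet
      have hstep := step_bound (le_of_lt hρ'0) hG hAm
      have hsub : Metric.cthickening ρ' (Metric.cthickening ((k:ℝ) * (c / n)) M)
          ⊆ Metric.cthickening (((k:ℕ)+1:ℝ) * (c / n)) M := by
        refine subset_trans (Metric.cthickening_mono hρ'lt.le _) ?_
        refine subset_trans (Metric.cthickening_cthickening_subset hcn.le (by positivity) _) ?_
        apply Metric.cthickening_mono
        push_cast
        ring_nf
        exact le_refl _
      have hmono : (γ (u (k+1))) (Metric.cthickening (((k:ℕ)+1:ℝ) * (c / n)) M)ᶜ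
          ≤ (γ (u (k+1))) (Metric.cthickening ρ' (Metric.cthickening ((k:ℝ) * (c / n)) M))ᶜ :=
        measure_mono (compl_subset_compl.mpr hsub)
      have hh' : h ρ' ≤ h (c / n) :=
        (hh.1 (le_of_lt hρ'0) hcn.le hρ'lt).le
      calc (γ (u (k+1))) (Metric.cthickening (((k+1:ℕ):ℝ) * (c / n)) M)ᶜ
          ≤ (γ (u (k+1))) (Metric.cthickening ρ' (Metric.cthickening ((k:ℝ) * (c / n)) M))ᶜ := by
            push_cast at hmono ⊢; exact hmono
        _ ≤ (γ (u k)) (Metric.cthickening ((k:ℝ) * (c / n)) M)ᶜ + ENNReal.ofReal (h ρ') := hstep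
        _ ≤ (k : ℝ≥0∞) * ENNReal.ofReal (h (c / n)) + ENNReal.ofReal (h (c / n)) := by
            exact add_le_add (ih hk) (ENNReal.ofReal_le_ofReal hh')
        _ = ((k+1:ℕ) : ℝ≥0∞) * ENNReal.ofReal (h (c / n)) := by
            push_cast
            ring
  have hfin := main n (le_refl n)
  have h1 : u n = t := by
    simp only [hu_def]
    field_simp
    ring
  have h2 : (n:ℝ) * (c / n) = c := by field_simp
  rwa [h1, h2] at hfin

lemma measure_cthickening_compl_zero [BorelSpace X] [TopologicalSpace.SeparableSpace X]
    {μ : Measure X} [IsFiniteMeasureOnCompacts μ] {h : ℝ → ℝ} {b : ℝ} {γ : ℝ → Measure X}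
    (hh : IsGauge h) (hγ : IsCurveM h μ b γ)
    {s t ε : ℝ} (hε : 0 < ε) (hs : s ∈ Icc (0:ℝ) b) (ht : t ∈ Icc (0:ℝ) b)
    (hst : |s - t| < ε) :
    (γ t) (Metric.cthickening ε (msupp (γ s)))ᶜ = 0 := by
  set c : ℝ := (|s - t| + ε) / 2 with hc_def
  have hc1 : |s - t| < c := by rw [hc_def]; linarith
  have hc2 : c ≤ ε := by rw [hc_def]; linarith
  have hc0 : 0 < c := lt_of_le_of_lt (abs_nonneg _) hc1
  have hmono : (γ t) (Metric.cthickening ε (msupp (γ s)))ᶜ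
      ≤ (γ t) (Metric.cthickening c (msupp (γ s)))ᶜ :=
    measure_mono (compl_subset_compl.mpr (Metric.cthickening_mono hc2 _))
  have key : ∀ n : ℕ, 1 ≤ n →
      (γ t) (Metric.cthickening ε (msupp (γ s)))ᶜ
        ≤ ENNReal.ofReal (c * (h (c / n) / (c / n))) := by
    intro n hn
    have hn0 : (0:ℝ) < n := by exact_mod_cast hn
    have hcn : 0 < c / n := div_pos hc0 hn0
    have heq : c * (h (c / n) / (c / n)) = (n : ℝ) * h (c / n) := by
      field_simp
    rw [heq, ENNReal.ofReal_mul (le_of_lt hn0), ENNReal.ofReal_natCast]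
    exact hmono.trans (chain_bound hh hγ hs ht hc1 (Nat.lt_of_lt_of_le zero_lt_one hn))
  have hlim : Tendsto (fun n : ℕ => ENNReal.ofReal (c * (h (c / n) / (c / n)))) atTop (𝓝 0) := by
    have h1 : Tendsto (fun n : ℕ => c / (n:ℝ)) atTop (nhdsWithin 0 (Set.Ioi 0)) := by
      rw [tendsto_nhdsWithin_iff]
      constructor
      · exact tendsto_const_div_atTop_nhds_zero_nat c
      · filter_upwards [eventually_ge_atTop 1] with n hn
        exact div_pos hc0 (by exact_mod_cast hn)
    have h2 : Tendsto (fun n : ℕ => h (c / n) / (c / n)) atTop (𝓝 0) :=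
      (hh.2.2.2.1).comp h1
    have h3 : Tendsto (fun n : ℕ => c * (h (c / n) / (c / n))) atTop (𝓝 0) := by
      simpa using h2.const_mul c
    have := (ENNReal.tendsto_ofReal h3)
    simpa using this
  exact le_antisymm (ge_of_tendsto hlim (eventually_atTop.mpr ⟨1, key⟩)) zero_le

lemma msupp_subset_cthickening [BorelSpace X] [TopologicalSpace.SeparableSpace X]
    {μ : Measure X} [IsFiniteMeasureOnCompacts μ] {h : ℝ → ℝ} {b : ℝ} {γ : ℝ → Measure X}
    (hh : IsGauge h) (hγ : IsCurveM h μ b γ)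
    {s t ε : ℝ} (hε : 0 < ε) (hs : s ∈ Icc (0:ℝ) b) (ht : t ∈ Icc (0:ℝ) b)
    (hst : |s - t| < ε) :
    msupp (γ t) ⊆ Metric.cthickening ε (msupp (γ s)) := by
  intro x hx
  by_contra hxc
  have hopen : IsOpen (Metric.cthickening ε (msupp (γ s)))ᶜ :=
    Metric.isClosed_cthickening.isOpen_compl
  obtain ⟨r, hr, hball⟩ := Metric.isOpen_iff.mp hopen x hxc
  have h1 : 0 < (γ t) (Metric.ball x r) := hx r hr
  have h2 : (γ t) (Metric.ball x r) ≤ (γ t) (Metric.cthickening ε (msupp (γ s)))ᶜ :=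
    measure_mono hball
  rw [measure_cthickening_compl_zero hh hγ hε hs ht hst] at h2
  exact absurd (le_antisymm h2 zero_le) (ne_of_gt h1)

lemma union_msupp_isCompact [BorelSpace X] [TopologicalSpace.SeparableSpace X]
    [LocallyCompactSpace X]
    {μ : Measure X} [IsFiniteMeasureOnCompacts μ] {h : ℝ → ℝ} {b : ℝ} {γ : ℝ → Measure X}
    (hh : IsGauge h) (hγ : IsCurveM h μ b γ) :
    IsCompact (⋃ s ∈ Icc (0:ℝ) b, msupp (γ s)) := by
  set U := ⋃ s ∈ Icc (0:ℝ) b, msupp (γ s) with hU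
  -- choose compact sets containing thickenings of each support
  have hex : ∀ s ∈ Icc (0:ℝ) b, ∃ δ : ℝ, 0 < δ ∧
      ∃ K : Set X, IsCompact K ∧ Metric.cthickening δ (msupp (γ s)) ⊆ K := by
    intro s hs
    obtain ⟨K, hK, hKi⟩ := exists_compact_superset (hγ.2.1 s hs).2
    obtain ⟨δ, hδ, hsub⟩ := (hγ.2.1 s hs).2.exists_cthickening_subset_open isOpen_interior hKi
    exact ⟨δ, hδ, K, hK, hsub.trans interior_subset⟩
  choose! δ hδ K hK hKsub using hex
  -- finite subcover of [0,b]
  obtain ⟨T, hT, hTcov⟩ := isCompact_Icc.elim_nhds_subcover (fun s => Metric.ball s (δ s))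
    (fun s hs => Metric.ball_mem_nhds s (hδ s hs))
  -- U is contained in the compact set ⋃ x ∈ T, K x
  have hUsub : U ⊆ ⋃ x ∈ T, K x := by
    rintro y hy
    simp only [hU, mem_iUnion] at hy
    obtain ⟨t, ht, hyt⟩ := hy
    obtain ⟨x, hxT, hxball⟩ := mem_iUnion₂.mp (hTcov ht)
    have hxI : x ∈ Icc (0:ℝ) b := hT x hxT
    have hdist : |x - t| < δ x := by
      rw [Metric.mem_ball, Real.dist_eq, abs_sub_comm] at hxball
      exact hxball
    have hsub := msupp_subset_cthickening hh hγ (hδ x hxI) hxI ht hdist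
    exact mem_iUnion₂.mpr ⟨x, hxT, hKsub x hxI (hsub hyt)⟩
  have hC : IsCompact (⋃ x ∈ T, K x) :=
    T.isCompact_biUnion (fun x hx => hK x (hT x hx))
  -- U is closed
  have hclosed : IsClosed U := by
    rw [← isOpen_compl_iff, isOpen_compl_iff, ← closure_subset_iff_isClosed]
    intro x hx
    -- the sets of parameters whose support nearly contains x
    set D : ℕ → Set ℝ := fun n =>
      {s ∈ Icc (0:ℝ) b | EMetric.infEdist x (msupp (γ s)) ≤ ENNReal.ofReal (1 / (n + 1))}
      with hD_def
    have hDC : ∀ n, closure (D n) ⊆ Icc (0:ℝ) b := fun n =>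
      closure_minimal (fun s hs => hs.1) isClosed_Icc
    have hDne : ∀ n, (D n).Nonempty := by
      intro n
      have hpos : (0:ℝ) < 1 / (n + 1) := by positivity
      obtain ⟨y, hyU, hyd⟩ := Metric.mem_closure_iff.mp hx (1 / (n + 1)) hpos
      simp only [hU, mem_iUnion] at hyU
      obtain ⟨s, hsI, hys⟩ := hyU
      refine ⟨s, hsI, ?_⟩
      refine le_trans (EMetric.infEdist_le_edist_of_mem hys) ?_
      rw [edist_dist]
      exact ENNReal.ofReal_le_ofReal hyd.le
    have hDanti : ∀ n, D (n + 1) ⊆ D n := by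
      intro n s hs
      refine ⟨hs.1, le_trans hs.2 (ENNReal.ofReal_le_ofReal ?_)⟩
      push_cast
      have h1 : (0:ℝ) < (n:ℝ) + 1 := by positivity
      have h2 : (0:ℝ) < (n:ℝ) + 1 + 1 := by positivity
      rw [div_le_div_iff₀ h2 h1]
      nlinarith
    have hint := IsCompact.nonempty_iInter_of_sequence_nonempty_isCompact_isClosed
      (fun n => closure (D n))
      (fun n => closure_mono (hDanti n))
      (fun n => (hDne n).mono subset_closure)
      (isCompact_Icc.of_isClosed_subset isClosed_closure (hDC 0))
      (fun n => isClosed_closure)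
    obtain ⟨sS, hsS⟩ := hint
    simp only [mem_iInter] at hsS
    have hsSI : sS ∈ Icc (0:ℝ) b := hDC 0 (hsS 0)
    have hkey : ∀ r : ℝ, 0 < r → EMetric.infEdist x (msupp (γ sS)) ≤ ENNReal.ofReal r := by
      intro r hr
      obtain ⟨n, hn⟩ := exists_nat_one_div_lt (show (0:ℝ) < r / 2 by linarith)
      obtain ⟨s, hsD, hsd⟩ := Metric.mem_closure_iff.mp (hsS n) (r / 3) (by linarith)
      have hsI : s ∈ Icc (0:ℝ) b := hsD.1
      have hsub : msupp (γ s) ⊆ Metric.cthickening (r / 3) (msupp (γ sS)) := by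
        refine msupp_subset_cthickening hh hγ (by linarith) hsSI hsI ?_
        rw [abs_sub_comm, ← Real.dist_eq, dist_comm]
        exact hsd
      have hlt : EMetric.infEdist x (msupp (γ s)) < ENNReal.ofReal (r / 2) :=
        lt_of_le_of_lt hsD.2 (ENNReal.ofReal_lt_ofReal_iff (by linarith) |>.mpr hn)
      obtain ⟨y, hyM, hyd⟩ := EMetric.infEdist_lt_iff.mp hlt
      calc EMetric.infEdist x (msupp (γ sS))
          ≤ edist x y + EMetric.infEdist y (msupp (γ sS)) :=
            EMetric.infEdist_le_edist_add_infEdist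
        _ ≤ ENNReal.ofReal (r / 2) + ENNReal.ofReal (r / 3) := add_le_add hyd.le (hsub hyM)
        _ = ENNReal.ofReal (r / 2 + r / 3) := (ENNReal.ofReal_add (by linarith) (by linarith)).symm
        _ ≤ ENNReal.ofReal r := ENNReal.ofReal_le_ofReal (by linarith)
    have hzero : EMetric.infEdist x (msupp (γ sS)) = 0 := by
      refine le_antisymm ?_ zero_le
      refine ENNReal.le_of_forall_pos_le_add fun ε hε _ => ?_
      rw [zero_add, ← ENNReal.ofReal_coe_nnreal]
      exact hkey ε (by exact_mod_cast hε)
    have hxin : x ∈ msupp (γ sS) := by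
      rw [← (msupp_isClosed (γ sS)).closure_eq]
      exact EMetric.mem_closure_iff_infEdist_zero.mpr hzero
    exact mem_iUnion₂.mpr ⟨sS, hsSI, hxin⟩
  exact hC.of_isClosed_subset hclosed hUsub

/-- Along a rectifiable curve subparametrized by arc-length in `𝓜`,
`supp(η(t)) ⊆ (supp(η(s)))_ε` whenever `|s−t| < ε`, and the union of the supports is
compact. -/
theorem stmt6 {X : Type*} [MetricSpace X] [MeasurableSpace X] [BorelSpace X]
    [LocallyCompactSpace X] [TopologicalSpace.SeparableSpace X]
    (μ : Measure X) [μ.Regular]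
    (hμ : ∀ (x : X) (r : ℝ), 0 < r → 0 < μ (Metric.ball x r) ∧ μ (Metric.ball x r) < ⊤)
    (h : ℝ → ℝ) (hh : IsGauge h)
    (b : ℝ) (γ : ℝ → Measure X) (hγ : IsCurveM h μ b γ) :
    (∀ ε : ℝ, 0 < ε → ∀ s ∈ Icc (0:ℝ) b, ∀ t ∈ Icc (0:ℝ) b, |s - t| < ε →
      msupp (γ t) ⊆ Metric.cthickening ε (msupp (γ s))) ∧
    IsCompact (⋃ s ∈ Icc (0:ℝ) b, msupp (γ s)) := by
  constructor
  · intro ε hε s hs t ht hst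
    exact msupp_subset_cthickening hh hγ hε hs ht hst
  · exact union_msupp_isCompact hh hγ
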